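/- Lemma 2.1 (normalized form for two equal halves): Let A, B : Fin 26 → ℕ be sorted-in-nondecreasing-order frequency vectors each summing to n > 0, and let C be the nondecreasing rearrangement of A + B (which sums to 2n). Then (1/(2n))·[(∑_{i=13}^{25} C(i)) − (∑_{i=0}^{12} C(i))] ≤ (1/2)·[(1/n)((∑_{i=13}^{25} A(i)) − (∑_{i=0}^{12} A(i))) + (1/n)((∑_{i=13}^{25} B(i)) − (∑_{i=0}^{12} B(i)))], working in ℚ. -/
import Mathlib

private lemma subset_sum_le_top (A : Fin 26 → ℕ) (hAmono : Monotone A)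
    (S : Finset (Fin 26)) (hS : S.card = 13) :
    ∑ i ∈ S, A i ≤ ∑ i ∈ Finset.univ.filter (fun i : Fin 26 => 13 ≤ (i : ℕ)), A i := by
  set T : Finset (Fin 26) := Finset.univ.filter (fun i : Fin 26 => 13 ≤ (i : ℕ)) with hTdef
  have hT : T.card = 13 := by decide
  have hcard : (S \ T).card = (T \ S).card := by
    have h1 := Finset.card_sdiff_add_card_inter S T
    have h2 := Finset.card_sdiff_add_card_inter T S
    rw [Finset.inter_comm] at h2
    omega
  have h12 : (12 : Fin 26) = ⟨12, by norm_num⟩ := rfl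
  have hST : ∑ i ∈ S \ T, A i ≤ ∑ i ∈ T \ S, A i := by
    calc ∑ i ∈ S \ T, A i ≤ (S \ T).card • A ⟨12, by norm_num⟩ := by
          apply Finset.sum_le_card_nsmul
          intro i hi
          have hi' : ¬ (13 ≤ (i : ℕ)) := by
            have := (Finset.mem_sdiff.mp hi).2
            simpa [hTdef] using this
          exact hAmono (Fin.le_def.mpr (by omega))
      _ = (T \ S).card • A ⟨12, by norm_num⟩ := by rw [hcard]
      _ ≤ ∑ i ∈ T \ S, A i := by
          apply Finset.card_nsmul_le_sum
          intro i hi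
          have hi' : 13 ≤ (i : ℕ) := by
            have := (Finset.mem_sdiff.mp hi).1
            simpa [hTdef] using this
          exact hAmono (Fin.le_def.mpr (by omega))
  have e1 : ∑ i ∈ S ∩ T, A i + ∑ i ∈ S \ T, A i = ∑ i ∈ S, A i :=
    Finset.sum_inter_add_sum_sdiff S T A
  have e2 : ∑ i ∈ T ∩ S, A i + ∑ i ∈ T \ S, A i = ∑ i ∈ T, A i :=
    Finset.sum_inter_add_sum_sdiff T S A
  rw [Finset.inter_comm] at e2
  omega

set_option maxHeartbeats 1000000 in
theorem normalized_twist_merge_le_average (n : ℕ) (hn : 0 < n)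
    (A B C : Fin 26 → ℕ)
    (hAmono : Monotone A) (hBmono : Monotone B)
    (hA : ∑ i, A i = n) (hB : ∑ i, B i = n)
    (σ : Equiv.Perm (Fin 26)) (hperm : C = (A + B) ∘ σ) (hCmono : Monotone C) :
    (1 / (2 * (n : ℚ))) *
        ((∑ i ∈ Finset.univ.filter (fun i : Fin 26 => 13 ≤ (i : ℕ)), (C i : ℚ)) -
          ∑ i ∈ Finset.univ.filter (fun i : Fin 26 => (i : ℕ) < 13), (C i : ℚ)) ≤
      (1 / 2) *
        ((1 / (n : ℚ)) *
            ((∑ i ∈ Finset.univ.filter (fun i : Fin 26 => 13 ≤ (i : ℕ)), (A i : ℚ)) -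
              ∑ i ∈ Finset.univ.filter (fun i : Fin 26 => (i : ℕ) < 13), (A i : ℚ)) +
          (1 / (n : ℚ)) *
            ((∑ i ∈ Finset.univ.filter (fun i : Fin 26 => 13 ≤ (i : ℕ)), (B i : ℚ)) -
              ∑ i ∈ Finset.univ.filter (fun i : Fin 26 => (i : ℕ) < 13), (B i : ℚ))) := by
  set T : Finset (Fin 26) := Finset.univ.filter (fun i : Fin 26 => 13 ≤ (i : ℕ)) with hTdef
  set L : Finset (Fin 26) := Finset.univ.filter (fun i : Fin 26 => (i : ℕ) < 13) with hLdef
  -- the image of T under σ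
  set S : Finset (Fin 26) := T.image σ with hSdef
  have hTcard : T.card = 13 := by rw [hTdef]; decide
  have hScard : S.card = 13 := by
    rw [hSdef, Finset.card_image_of_injective _ σ.injective]
    exact hTcard
  -- key inequality on naturals
  have hkey : ∑ i ∈ T, C i ≤ ∑ i ∈ T, A i + ∑ i ∈ T, B i := by
    have h1 : ∑ i ∈ T, C i = ∑ j ∈ S, (A j + B j) := by
      rw [hperm, hSdef, Finset.sum_image (fun a _ b _ h => σ.injective h)]
      rfl
    rw [h1, Finset.sum_add_distrib]
    exact Nat.add_le_add (subset_sum_le_top A hAmono S hScard)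
      (subset_sum_le_top B hBmono S hScard)
  -- totals
  have hC : ∑ i, C i = 2 * n := by
    rw [hperm]
    have : ∑ i, ((A + B) ∘ σ) i = ∑ i, (A + B) i := Equiv.sum_comp σ (A + B)
    rw [this]
    simp only [Pi.add_apply, Finset.sum_add_distrib, hA, hB]
    ring
  -- lower halves = total - upper halves
  have hsplit : ∀ f : Fin 26 → ℕ, ∑ i ∈ T, f i + ∑ i ∈ L, f i = ∑ i, f i := by
    intro f
    rw [hTdef, hLdef]
    have : (Finset.univ.filter (fun i : Fin 26 => (i : ℕ) < 13)) =
        Finset.univ.filter (fun i : Fin 26 => ¬ 13 ≤ (i : ℕ)) := by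
      apply Finset.filter_congr; intro i _; simp
    rw [this, Finset.sum_filter_add_sum_filter_not]
  have hCs := hsplit C
  have hAs := hsplit A
  have hBs := hsplit B
  rw [hA] at hAs; rw [hB] at hBs; rw [hC] at hCs
  -- pass to ℚ
  have hn' : (0 : ℚ) < n := by exact_mod_cast hn
  have hAq : (∑ i ∈ T, (A i : ℚ)) + ∑ i ∈ L, (A i : ℚ) = (n : ℚ) := by exact_mod_cast hAs
  have hBq : (∑ i ∈ T, (B i : ℚ)) + ∑ i ∈ L, (B i : ℚ) = (n : ℚ) := by exact_mod_cast hBs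
  have hCq : (∑ i ∈ T, (C i : ℚ)) + ∑ i ∈ L, (C i : ℚ) = 2 * (n : ℚ) := by exact_mod_cast hCs
  have hcq : (∑ i ∈ T, (C i : ℚ)) ≤ (∑ i ∈ T, (A i : ℚ)) + ∑ i ∈ T, (B i : ℚ) := by
    exact_mod_cast hkey
  have h1 : ∑ i ∈ L, (A i : ℚ) = n - ∑ i ∈ T, (A i : ℚ) := by linarith
  have h2 : ∑ i ∈ L, (B i : ℚ) = n - ∑ i ∈ T, (B i : ℚ) := by linarith
  have h3 : ∑ i ∈ L, (C i : ℚ) = 2 * n - ∑ i ∈ T, (C i : ℚ) := by linarith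
  rw [h1, h2, h3]
  have hne : (n : ℚ) ≠ 0 := ne_of_gt hn'
  have h2n : (0 : ℚ) < 2 * n := by positivity
  calc 1 / (2 * (n:ℚ)) * ((∑ i ∈ T, (C i : ℚ)) - (2 * n - ∑ i ∈ T, (C i : ℚ)))
      = (2 * (∑ i ∈ T, (C i : ℚ)) - 2 * n) / (2 * n) := by ring
    _ ≤ (2 * ((∑ i ∈ T, (A i : ℚ)) + ∑ i ∈ T, (B i : ℚ)) - 2 * n) / (2 * n) :=
        (div_le_div_iff_of_pos_right h2n).mpr (by linarith)
    _ = 1 / 2 * (1 / (n:ℚ) * ((∑ i ∈ T, (A i : ℚ)) - (n - ∑ i ∈ T, (A i : ℚ))) +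
          1 / (n:ℚ) * ((∑ i ∈ T, (B i : ℚ)) - (n - ∑ i ∈ T, (B i : ℚ)))) := by
        field_simp
        ring
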